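/- Define H(s,t) = 1/(1+exp((s+t)/2)) + 1/(1+exp((s-t)/2)). For every nonnegative integer k and real b, the integral F_{2k+1}(b) = ∫₀^∞ x^{2k+1} H(x,b) dx equals (2k+1)! · Σ_{i=0}^{k+1} ζ(2i)·(2^{2i+1}-4)·b^{2k+2-2i}/(2k+2-2i)!, where ζ(0) = -1/2. -/

import Mathlib

open MeasureTheory Real Set

/-- H(s,t) = 1/(1+exp((s+t)/2)) + 1/(1+exp((s-t)/2)). -/
noncomputable def H (s t : ℝ) : ℝ :=
  1 / (1 + Real.exp ((s + t) / 2)) + 1 / (1 + Real.exp ((s - t) / 2))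

noncomputable def ff (u : ℝ) : ℝ := 1 / (1 + Real.exp (u / 2))

lemma H_eq (x b : ℝ) : H x b = ff (x + b) + ff (x - b) := rfl

lemma one_add_exp_pos (v : ℝ) : 0 < 1 + Real.exp v := by positivity

lemma continuous_ff : Continuous ff := by
  apply Continuous.div continuous_const
  · fun_prop
  · intro x; exact (one_add_exp_pos _).ne'

lemma ff_nonneg (u : ℝ) : 0 ≤ ff u := by
  unfold ff; positivity

lemma ff_le (u : ℝ) : ff u ≤ Real.exp (-(u / 2)) := by
  unfold ff
  rw [div_le_iff₀ (one_add_exp_pos _), mul_add, mul_one, ← Real.exp_add, neg_add_cancel,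
    Real.exp_zero]
  linarith [Real.exp_nonneg (-(u / 2))]

lemma ff_neg (u : ℝ) : ff (-u) = 1 - ff u := by
  unfold ff
  have h1 := one_add_exp_pos (u / 2)
  have h2 := one_add_exp_pos (-u / 2)
  have key : Real.exp (-u / 2) * Real.exp (u / 2) = 1 := by
    rw [← Real.exp_add]; ring_nf; exact Real.exp_zero
  field_simp
  rw [neg_div] at key
  nlinarith [key]

lemma tendsto_aux (m : ℕ) {r : ℝ} (hr : 0 < r) :
    Filter.Tendsto (fun x : ℝ => x ^ m * Real.exp (-(r * x))) Filter.atTop (nhds 0) := by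
  have h := tendsto_rpow_mul_exp_neg_mul_atTop_nhds_zero m r hr
  apply h.congr'
  filter_upwards [Filter.eventually_gt_atTop (0:ℝ)] with x hx
  rw [Real.rpow_natCast, neg_mul]

lemma integrableOn_pow_exp (m : ℕ) {r : ℝ} (hr : 0 < r) :
    IntegrableOn (fun u : ℝ => u ^ m * Real.exp (-(r * u))) (Ioi 0) := by
  apply integrable_of_isBigO_exp_neg (half_pos hr) (Continuous.continuousOn (by fun_prop))
  apply Asymptotics.IsBigO.of_bound 1
  have ht := tendsto_aux m (half_pos hr)
  filter_upwards [Filter.eventually_ge_atTop (0:ℝ),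
    ht.eventually (gt_mem_nhds one_pos)] with u hu0 hu1
  have : Real.exp (-(r * u)) = Real.exp (-(r/2 * u)) * Real.exp (-(r/2 * u)) := by
    rw [← Real.exp_add]; ring_nf
  rw [Real.norm_eq_abs, Real.norm_eq_abs, abs_of_nonneg (by positivity), one_mul,
    abs_of_nonneg (Real.exp_nonneg _), this, ← mul_assoc]
  calc u ^ m * Real.exp (-(r/2 * u)) * Real.exp (-(r/2 * u))
      ≤ 1 * Real.exp (-(r/2 * u)) := by
        apply mul_le_mul_of_nonneg_right (le_of_lt hu1) (Real.exp_nonneg _)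
    _ = Real.exp (-(r/2) * u) := by rw [one_mul]; ring_nf

lemma integral_pow_exp (m : ℕ) {r : ℝ} (hr : 0 < r) :
    ∫ u in Ioi (0:ℝ), u ^ m * Real.exp (-(r * u)) = m.factorial / r ^ (m + 1) := by
  have h := integral_rpow_mul_exp_neg_mul_Ioi (a := (m + 1 : ℝ)) (by positivity) hr
  rw [show ((m:ℝ) + 1 - 1) = (m:ℝ) by ring] at h
  have e1 : ∫ t in Ioi (0:ℝ), t ^ ((m:ℝ)) * Real.exp (-(r * t))
      = ∫ u in Ioi (0:ℝ), u ^ m * Real.exp (-(r * u)) := by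
    apply setIntegral_congr_fun measurableSet_Ioi
    intro t ht
    dsimp only
    rw [Real.rpow_natCast]
  rw [e1] at h
  rw [h]
  rw [show ((m:ℝ) + 1) = ((m + 1 : ℕ) : ℝ) by push_cast; ring,
    Real.rpow_natCast, show ((m + 1 : ℕ) : ℝ) = (m:ℝ) + 1 by push_cast; ring,
    Real.Gamma_nat_eq_factorial]
  rw [div_pow, one_pow]
  ring

lemma integrableOn_shift (m : ℕ) (c d : ℝ) :
    IntegrableOn (fun u : ℝ => (u + c) ^ m * ff (u + d)) (Ioi 0) := by
  apply integrable_of_isBigO_exp_neg (b := 4⁻¹) (by norm_num)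
    (Continuous.continuousOn (((continuous_id.add continuous_const).pow m).mul
      (continuous_ff.comp (continuous_id.add continuous_const))))
  apply Asymptotics.IsBigO.of_bound (2 ^ m * Real.exp (-d / 2))
  have ht := tendsto_aux m (by norm_num : (0:ℝ) < 4⁻¹)
  filter_upwards [Filter.eventually_ge_atTop |c|, Filter.eventually_ge_atTop (0:ℝ),
    ht.eventually (gt_mem_nhds one_pos)] with u h1 h2 h3
  show ‖(u + c) ^ m * (ff ∘ fun x => x + d) u‖ ≤ 2 ^ m * Real.exp (-d / 2) * ‖Real.exp (-4⁻¹ * u)‖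
  rw [Real.norm_eq_abs, abs_mul, abs_pow, Real.norm_eq_abs, abs_of_nonneg (Real.exp_nonneg _)]
  simp only [Function.comp_apply, id_eq]
  rw [abs_of_nonneg (ff_nonneg _)]
  have hb1 : |u + c| ≤ 2 * u := by
    calc |u + c| ≤ |u| + |c| := abs_add_le _ _
    _ ≤ u + u := by rw [abs_of_nonneg h2]; linarith
    _ = 2 * u := by ring
  have hff : ff (u + d) ≤ Real.exp (-d / 2) * (Real.exp (-(4⁻¹ * u)) * Real.exp (-(4⁻¹ * u))) := by
    calc ff (u + d) ≤ Real.exp (-((u + d) / 2)) := ff_le _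
    _ = _ := by rw [← Real.exp_add, ← Real.exp_add]; ring_nf
  calc |u + c| ^ m * ff (u + d)
      ≤ (2 * u) ^ m * (Real.exp (-d / 2) * (Real.exp (-(4⁻¹ * u)) * Real.exp (-(4⁻¹ * u)))) := by
        apply mul_le_mul (pow_le_pow_left₀ (abs_nonneg _) hb1 m) hff (ff_nonneg _) (by positivity)
    _ = (2 ^ m * Real.exp (-d / 2)) * (u ^ m * Real.exp (-(4⁻¹ * u))) * Real.exp (-(4⁻¹ * u)) := by
        rw [mul_pow]; ring
    _ ≤ (2 ^ m * Real.exp (-d / 2)) * 1 * Real.exp (-(4⁻¹ * u)) := by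
        apply mul_le_mul_of_nonneg_right _ (Real.exp_nonneg _)
        exact mul_le_mul_of_nonneg_left (le_of_lt h3) (by positivity)
    _ = 2 ^ m * Real.exp (-d / 2) * Real.exp (-4⁻¹ * u) := by rw [mul_one]; ring_nf

lemma integrableOn_pow_ff (m : ℕ) :
    IntegrableOn (fun u : ℝ => u ^ m * ff u) (Ioi 0) := by
  have := integrableOn_shift m 0 0
  simpa using this

lemma summable_base (p : ℕ) (hp : 2 ≤ p) : Summable (fun j : ℕ => 1 / ((j:ℝ) + 1) ^ p) := by
  have h1 : Summable (fun n : ℕ => 1 / (n:ℝ) ^ p) := summable_one_div_nat_pow.mpr (by omega)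
  have h2 := (summable_nat_add_iff 1).mpr h1
  apply h2.congr
  intro n
  push_cast
  ring

lemma integral_pow_ff (m : ℕ) (hm : 1 ≤ m) :
    ∫ u in Ioi (0:ℝ), u ^ m * ff u
      = 2 ^ (m + 1) * m.factorial * ∑' j : ℕ, (-1:ℝ) ^ j / ((j:ℝ) + 1) ^ (m + 1) := by
  set F : ℕ → ℝ → ℝ := fun j u => (-1:ℝ) ^ j * (u ^ m * Real.exp (-((((j:ℝ) + 1) / 2) * u)))
    with hF
  have hrpos : ∀ j : ℕ, (0:ℝ) < ((j:ℝ) + 1) / 2 := fun j => by positivity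
  have hInt : ∀ j : ℕ, Integrable (F j) (volume.restrict (Ioi 0)) := fun j =>
    ((integrableOn_pow_exp m (hrpos j)).const_mul _)
  have hval : ∀ j : ℕ, (∫ u in Ioi (0:ℝ), ‖F j u‖)
      = m.factorial / (((j:ℝ) + 1) / 2) ^ (m + 1) := by
    intro j
    have heqon : ∀ u ∈ Ioi (0:ℝ), ‖F j u‖ = u ^ m * Real.exp (-((((j:ℝ) + 1) / 2) * u)) := by
      intro u hu
      have hu0 : (0:ℝ) ≤ u := le_of_lt hu
      simp only [hF, norm_mul, norm_pow, norm_neg, norm_one, one_pow, one_mul, Real.norm_eq_abs,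
        abs_of_nonneg (pow_nonneg hu0 m), abs_of_nonneg (Real.exp_nonneg _),
        abs_of_nonneg hu0]
    rw [setIntegral_congr_fun measurableSet_Ioi heqon, integral_pow_exp m (hrpos j)]
  have hS := summable_base (m + 1) (by omega)
  have hNorm : Summable fun j : ℕ => ∫ u in Ioi (0:ℝ), ‖F j u‖ := by
    apply Summable.congr ((hS.mul_left ((m.factorial : ℝ) * 2 ^ (m + 1))))
    intro j
    rw [hval j, div_pow]
    have : (((j:ℝ) + 1)) ^ (m+1) ≠ 0 := by positivity
    field_simp
  have heq := MeasureTheory.integral_tsum_of_summable_integral_norm hInt hNorm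
  have hpt : ∀ u ∈ Ioi (0:ℝ), u ^ m * ff u = (∑' j, F j u) := by
    intro u hu
    have hu0 : (0:ℝ) < u := hu
    set r := Real.exp (-(u / 2)) with hr
    have hr0 : (0:ℝ) < r := Real.exp_pos _
    have hr1 : r < 1 := by
      rw [hr, show (1:ℝ) = Real.exp 0 from (Real.exp_zero).symm]
      exact Real.exp_lt_exp.mpr (by linarith)
    have hgeom : HasSum (fun j : ℕ => (-r) ^ j) (1 - -r)⁻¹ :=
      hasSum_geometric_of_norm_lt_one
        (by rw [norm_neg, Real.norm_eq_abs, abs_of_pos hr0]; exact hr1)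
    have h2 := hgeom.mul_left (u ^ m * r)
    have hfun : (fun j : ℕ => (u ^ m * r) * (-r) ^ j) = fun j => F j u := by
      funext j
      simp only [hF]
      have hrj : r * r ^ j = Real.exp (-((((j:ℝ) + 1) / 2) * u)) := by
        rw [hr, ← Real.exp_nat_mul, ← Real.exp_add]
        congr 1; push_cast; ring
      rw [neg_pow, show u ^ m * r * ((-1:ℝ) ^ j * r ^ j) = (-1:ℝ) ^ j * (u ^ m * (r * r ^ j))
        by ring, hrj]
    rw [hfun] at h2
    rw [h2.tsum_eq]
    have hre : r * Real.exp (u / 2) = 1 := by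
      rw [hr, ← Real.exp_add]; ring_nf; exact Real.exp_zero
    have hffv : r * (1 - -r)⁻¹ = ff u := by
      rw [sub_neg_eq_add]
      unfold ff
      rw [hr] at hre ⊢
      have h1r : (1:ℝ) + Real.exp (-(u / 2)) ≠ 0 := by positivity
      have h2r : (1:ℝ) + Real.exp (u / 2) ≠ 0 := by positivity
      field_simp
      linear_combination hre
    rw [mul_assoc, hffv]
  calc ∫ u in Ioi (0:ℝ), u ^ m * ff u
      = ∫ u in Ioi (0:ℝ), ∑' j, F j u := setIntegral_congr_fun measurableSet_Ioi hpt
    _ = ∑' j, ∫ u in Ioi (0:ℝ), F j u := heq.symm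
    _ = ∑' j : ℕ, (2 ^ (m + 1) * (m.factorial : ℝ)) * ((-1:ℝ) ^ j / ((j:ℝ) + 1) ^ (m + 1)) := by
        apply tsum_congr
        intro j
        rw [hF]
        simp only
        rw [MeasureTheory.integral_const_mul, integral_pow_exp m (hrpos j), div_pow]
        have : (((j:ℝ) + 1)) ^ (m + 1) ≠ 0 := by positivity
        field_simp
    _ = 2 ^ (m + 1) * m.factorial * ∑' j : ℕ, (-1:ℝ) ^ j / ((j:ℝ) + 1) ^ (m + 1) :=
        tsum_mul_left

set_option maxHeartbeats 1000000 in
lemma zeta_term (i : ℕ) (hi : 1 ≤ i) :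
    (2:ℂ) ^ (2 * i + 1) * ((∑' j : ℕ, (-1:ℝ) ^ j / ((j:ℝ) + 1) ^ (2 * i) : ℝ) : ℂ)
      = ((2:ℂ) ^ (2 * i + 1) - 4) * riemannZeta (2 * i) := by
  set s := 2 * i with hs
  have hs2 : 2 ≤ s := by omega
  set a : ℕ → ℝ := fun n => 1 / ((n:ℝ) + 1) ^ s with ha
  have hsum : Summable a := summable_base s hs2
  set z := ∑' n, a n with hz
  have hza : HasSum a z := hsum.hasSum
  have hinj2 : Function.Injective (fun n : ℕ => 2 * n) := fun x y h => by dsimp at h; omega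
  have hinj2' : Function.Injective (fun n : ℕ => 2 * n + 1) := fun x y h => by dsimp at h; omega
  have hsume : Summable (fun n : ℕ => a (2 * n)) := hsum.comp_injective hinj2
  have hsumo : Summable (fun n : ℕ => a (2 * n + 1)) := hsum.comp_injective hinj2'
  set ze := ∑' n, a (2 * n) with hze
  set zo := ∑' n, a (2 * n + 1) with hzo
  have heo : HasSum a (ze + zo) := (hsume.hasSum).even_add_odd (hsumo.hasSum)
  have hzeo : z = ze + zo := hza.unique heo
  have hfun : (fun n : ℕ => a (2 * n + 1)) = fun n => ((2:ℝ) ^ s)⁻¹ * a n := by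
    funext n
    simp only [ha]
    rw [show ((2 * n + 1 : ℕ):ℝ) + 1 = 2 * ((n:ℝ) + 1) by push_cast; ring, mul_pow,
      one_div, one_div, mul_inv]
  have hzo_eq : zo = ((2:ℝ) ^ s)⁻¹ * z := by
    rw [hzo, hfun, tsum_mul_left]
  have h1 : HasSum (fun n : ℕ => (-1:ℝ) ^ (2 * n) * a (2 * n)) ze := by
    have he : (fun n : ℕ => (-1:ℝ) ^ (2 * n) * a (2 * n)) = fun n => a (2 * n) := by
      funext n; rw [pow_mul]; norm_num
    rw [he]; exact hsume.hasSum
  have h2 : HasSum (fun n : ℕ => (-1:ℝ) ^ (2 * n + 1) * a (2 * n + 1)) (-zo) := by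
    have ho : (fun n : ℕ => (-1:ℝ) ^ (2 * n + 1) * a (2 * n + 1))
        = fun n => -(a (2 * n + 1)) := by
      funext n; rw [pow_succ, pow_mul]; norm_num
    rw [ho]; exact (hsumo.hasSum).neg
  have heta : HasSum (fun n : ℕ => (-1:ℝ) ^ n * a n) (ze + -zo) := h1.even_add_odd h2
  have heta' : (∑' j : ℕ, (-1:ℝ) ^ j / ((j:ℝ) + 1) ^ s) = z - 2 * (((2:ℝ) ^ s)⁻¹ * z) := by
    have hfe : (fun j : ℕ => (-1:ℝ) ^ j / ((j:ℝ) + 1) ^ s) = fun j => (-1:ℝ) ^ j * a j := by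
      funext j; simp only [ha]; rw [mul_one_div]
    rw [hfe, heta.tsum_eq, ← hzo_eq]
    rw [show ze = z - zo by rw [hzeo]; ring]
    ring
  have hsummC : Summable (fun n : ℕ => 1 / (n:ℂ) ^ s) := by
    have hr : Summable (fun n : ℕ => 1 / (n:ℝ) ^ s) := summable_one_div_nat_pow.mpr (by omega)
    have := Complex.summable_ofReal.mpr hr
    apply this.congr
    intro n
    push_cast
    ring
  have hzeta : riemannZeta s = (z:ℂ) := by
    rw [zeta_nat_eq_tsum_of_gt_one (show 1 < s by omega), Summable.tsum_eq_zero_add hsummC,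
      show (1 / ((0:ℕ):ℂ) ^ s) = 0 by simp [zero_pow (show s ≠ 0 by omega)], zero_add,
      hz, Complex.ofReal_tsum]
    apply tsum_congr
    intro n
    simp only [ha]
    push_cast
    ring
  have hcast : (2 * (i:ℂ)) = ((s:ℕ):ℂ) := by rw [hs]; push_cast; ring
  rw [heta', hcast, hzeta]
  push_cast
  have h2s : ((2:ℂ) ^ s) ≠ 0 := pow_ne_zero _ two_ne_zero
  field_simp
  ring

lemma sum_range_two_mul {M : Type*} [AddCommMonoid M] (f : ℕ → M) (m : ℕ) :
    ∑ j ∈ Finset.range (2 * m), f j = ∑ i ∈ Finset.range m, (f (2 * i) + f (2 * i + 1)) := by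
  induction m with
  | zero => simp
  | succ m ih =>
    rw [show 2 * (m + 1) = (2 * m + 1) + 1 by ring, Finset.sum_range_succ, Finset.sum_range_succ,
      ih, Finset.sum_range_succ, add_assoc]

lemma integral_Ioi_add (g : ℝ → ℝ) (a c : ℝ) :
    ∫ x in Ioi a, g (x + c) = ∫ x in Ioi (a + c), g x := by
  have hind : (Ioi a).indicator (fun x => g (x + c)) = fun x => (Ioi (a + c)).indicator g (x + c) := by
    funext x
    by_cases h : a < x
    · rw [indicator_of_mem (by exact h : x ∈ Ioi a),
        indicator_of_mem (by simp only [mem_Ioi]; linarith)]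
    · rw [indicator_of_notMem (by exact h),
        indicator_of_notMem (by simp only [mem_Ioi]; intro hc; exact h (by linarith))]
  rw [← integral_indicator measurableSet_Ioi, hind,
    MeasureTheory.integral_add_right_eq_self (fun x => (Ioi (a + c)).indicator g x) c,
    integral_indicator measurableSet_Ioi]

lemma key (k : ℕ) {b : ℝ} (hb : 0 ≤ b) :
    ∫ x in Ioi (0:ℝ), x ^ (2 * k + 1) * H x b
      = b ^ (2 * k + 2) / (2 * k + 2)
        + ∑ j ∈ Finset.range (2 * k + 2),
            ((2 * k + 1).choose j : ℝ) * b ^ (2 * k + 1 - j) * (1 + (-1:ℝ) ^ (2 * k + 1 - j)) *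
              ∫ u in Ioi (0:ℝ), u ^ j * ff u := by
  set n := 2 * k + 1 with hn
  have hodd : Odd n := ⟨k, by omega⟩
  have Iplus : IntegrableOn (fun u : ℝ => (u + b) ^ n * ff u) (Ioi 0) := by
    simpa using integrableOn_shift n b 0
  have Iminus : IntegrableOn (fun u : ℝ => (u - b) ^ n * ff u) (Ioi 0) := by
    simpa [sub_eq_add_neg] using integrableOn_shift n (-b) 0
  have hcont1 : Continuous (fun x : ℝ => (b - x) ^ n * (1 - ff x)) :=
    ((continuous_const.sub continuous_id).pow n).mul (continuous_const.sub continuous_ff)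
  have hcont2 : Continuous (fun x : ℝ => (x - b) ^ n * ff x) :=
    ((continuous_id.sub continuous_const).pow n).mul continuous_ff
  have hcont3 : Continuous (fun x : ℝ => (x + b) ^ n * ff x) :=
    ((continuous_id.add continuous_const).pow n).mul continuous_ff
  have h1 : ∫ x in Ioi (0:ℝ), x ^ n * H x b
      = (∫ x in Ioi (0:ℝ), x ^ n * ff (x + b)) + ∫ x in Ioi (0:ℝ), x ^ n * ff (x - b) := by
    rw [← integral_add (by simpa [IntegrableOn] using integrableOn_shift n 0 b)
      (by simpa [sub_eq_add_neg, IntegrableOn] using integrableOn_shift n 0 (-b))]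
    apply setIntegral_congr_fun measurableSet_Ioi
    intro x hx
    dsimp only
    rw [H_eq]
    ring
  have h2 : (∫ x in Ioi (0:ℝ), x ^ n * ff (x + b)) = ∫ u in Ioi b, (u - b) ^ n * ff u := by
    calc ∫ x in Ioi (0:ℝ), x ^ n * ff (x + b)
        = ∫ x in Ioi (0:ℝ), (fun u => (u - b) ^ n * ff u) (x + b) := by
          apply setIntegral_congr_fun measurableSet_Ioi
          intro x hx
          simp [add_sub_cancel_right]
      _ = ∫ u in Ioi (0 + b), (u - b) ^ n * ff u := integral_Ioi_add (fun u => (u - b) ^ n * ff u) 0 b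
      _ = ∫ u in Ioi b, (u - b) ^ n * ff u := by rw [zero_add]
  have h3 : (∫ x in Ioi (0:ℝ), x ^ n * ff (x - b)) = ∫ u in Ioi (-b), (u + b) ^ n * ff u := by
    calc ∫ x in Ioi (0:ℝ), x ^ n * ff (x - b)
        = ∫ x in Ioi (0:ℝ), (fun u => (u + b) ^ n * ff u) (x + -b) := by
          apply setIntegral_congr_fun measurableSet_Ioi
          intro x hx
          simp only
          rw [show x + -b + b = x by ring, show x + -b = x - b by ring]
      _ = ∫ u in Ioi (0 + -b), (u + b) ^ n * ff u := integral_Ioi_add (fun u => (u + b) ^ n * ff u) 0 (-b)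
      _ = ∫ u in Ioi (-b), (u + b) ^ n * ff u := by rw [zero_add]
  have h4 : ∫ u in Ioi (0:ℝ), (u - b) ^ n * ff u
      = (∫ u in Ioc (0:ℝ) b, (u - b) ^ n * ff u) + ∫ u in Ioi b, (u - b) ^ n * ff u := by
    rw [← setIntegral_union (Ioc_disjoint_Ioi le_rfl) measurableSet_Ioi
      (Iminus.mono_set Ioc_subset_Ioi_self) (Iminus.mono_set (Ioi_subset_Ioi hb)),
      Ioc_union_Ioi_eq_Ioi hb]
  have h5 : ∫ u in Ioi (-b), (u + b) ^ n * ff u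
      = (∫ u in Ioc (-b) (0:ℝ), (u + b) ^ n * ff u) + ∫ u in Ioi (0:ℝ), (u + b) ^ n * ff u := by
    rw [← setIntegral_union (Ioc_disjoint_Ioi le_rfl) measurableSet_Ioi
      (hcont3.integrableOn_Ioc) Iplus, Ioc_union_Ioi_eq_Ioi (neg_nonpos.mpr hb)]
  have h6 : ∫ u in Ioc (-b) (0:ℝ), (u + b) ^ n * ff u
      = ∫ x in (0:ℝ)..b, (b - x) ^ n * (1 - ff x) := by
    have hrefl := intervalIntegral.integral_comp_neg (a := (0:ℝ)) (b := b)
      (f := fun u => (u + b) ^ n * ff u)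
    rw [neg_zero] at hrefl
    rw [← intervalIntegral.integral_of_le (neg_nonpos.mpr hb), ← hrefl]
    apply intervalIntegral.integral_congr
    intro x hx
    simp only
    rw [ff_neg]
    ring
  have h7 : ∫ u in Ioc (0:ℝ) b, (u - b) ^ n * ff u = ∫ x in (0:ℝ)..b, (x - b) ^ n * ff x :=
    (intervalIntegral.integral_of_le hb).symm
  have h8 : (∫ x in (0:ℝ)..b, (b - x) ^ n * (1 - ff x)) - (∫ x in (0:ℝ)..b, (x - b) ^ n * ff x)
      = b ^ (n + 1) / (n + 1) := by
    rw [← intervalIntegral.integral_sub (hcont1.intervalIntegrable _ _)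
      (hcont2.intervalIntegrable _ _)]
    have hpt : ∀ x : ℝ, (b - x) ^ n * (1 - ff x) - (x - b) ^ n * ff x = (b - x) ^ n := by
      intro x
      rw [show x - b = -(b - x) by ring, hodd.neg_pow]
      ring
    rw [intervalIntegral.integral_congr (fun x _ => hpt x)]
    rw [intervalIntegral.integral_comp_sub_left (fun x => x ^ n) b]
    simp only [sub_self, sub_zero]
    rw [integral_pow]
    simp
  have h9 : (∫ u in Ioi (0:ℝ), (u - b) ^ n * ff u) + (∫ u in Ioi (0:ℝ), (u + b) ^ n * ff u)
      = ∑ j ∈ Finset.range (n + 1), (n.choose j : ℝ) * b ^ (n - j) * (1 + (-1:ℝ) ^ (n - j)) *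
          ∫ u in Ioi (0:ℝ), u ^ j * ff u := by
    rw [← integral_add Iminus Iplus]
    have expand : ∀ u ∈ Ioi (0:ℝ), (u - b) ^ n * ff u + (u + b) ^ n * ff u
        = ∑ j ∈ Finset.range (n + 1),
            (n.choose j : ℝ) * b ^ (n - j) * (1 + (-1:ℝ) ^ (n - j)) * (u ^ j * ff u) := by
      intro u hu
      have e1 : (u + b) ^ n = ∑ j ∈ Finset.range (n + 1),
          u ^ j * b ^ (n - j) * (n.choose j : ℝ) := add_pow u b n
      have e2 : (u - b) ^ n = ∑ j ∈ Finset.range (n + 1),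
          u ^ j * (-b) ^ (n - j) * (n.choose j : ℝ) := by rw [sub_eq_add_neg, add_pow]
      rw [e1, e2, Finset.sum_mul, Finset.sum_mul, ← Finset.sum_add_distrib]
      apply Finset.sum_congr rfl
      intro j hj
      rw [neg_pow]
      ring
    rw [setIntegral_congr_fun measurableSet_Ioi expand, integral_finset_sum _
      (fun j hj => (integrableOn_pow_ff j).const_mul _)]
    apply Finset.sum_congr rfl
    intro j hj
    rw [MeasureTheory.integral_const_mul]
  rw [h1, h2, h3, show 2 * k + 2 = n + 1 by rw [hn],
    show (2 * (k:ℝ) + 2) = ((n:ℝ) + 1) by rw [hn]; push_cast; ring]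
  linarith [h4, h5, h6, h7, h8, h9]

theorem stmt_main (k : ℕ) {b : ℝ} (hb : 0 ≤ b) :
    ((∫ x in Ioi (0:ℝ), x ^ (2 * k + 1) * H x b : ℝ) : ℂ)
      = (Nat.factorial (2 * k + 1) : ℂ) *
        ∑ i ∈ Finset.range (k + 2),
          riemannZeta (2 * i) * ((2 : ℂ) ^ (2 * i + 1) - 4) *
            (b : ℂ) ^ (2 * k + 2 - 2 * i) / (Nat.factorial (2 * k + 2 - 2 * i) : ℂ) := by
  rw [key k hb, Complex.ofReal_add, Complex.ofReal_sum,
    congrArg Finset.range (show 2 * k + 2 = 2 * (k + 1) by ring),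
    sum_range_two_mul, Finset.sum_range_succ' _ (k + 1), mul_add, Finset.mul_sum]
  have hZ0 : ((2 * k + 1).factorial : ℂ) *
      (riemannZeta (2 * ((0:ℕ):ℂ)) * ((2 : ℂ) ^ (2 * 0 + 1) - 4) *
        (b : ℂ) ^ (2 * k + 2 - 2 * 0) / ((2 * k + 2 - 2 * 0).factorial : ℂ))
      = ((b ^ (2 * k + 2) / (2 * (k:ℝ) + 2) : ℝ) : ℂ) := by
    have hfact : ((2 * k + 2).factorial : ℂ) = ((2:ℂ) * k + 2) * ((2 * k + 1).factorial : ℂ) := by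
      rw [show 2 * k + 2 = (2 * k + 1) + 1 by ring, Nat.factorial_succ]
      push_cast; ring
    simp only [Nat.cast_zero, mul_zero, riemannZeta_zero, Nat.mul_zero, Nat.sub_zero]
    rw [hfact]
    have h1 : (((2 * k + 1).factorial : ℂ)) ≠ 0 := Nat.cast_ne_zero.mpr (Nat.factorial_ne_zero _)
    have h2 : ((2:ℂ) * k + 2) ≠ 0 := by
      intro h
      have := congrArg Complex.re h
      simp at this
      nlinarith [this]
    push_cast
    field_simp
    ring
  have hS : ∀ i ∈ Finset.range (k + 1),
      (((((2 * k + 1).choose (2 * i) : ℝ) * b ^ (2 * k + 1 - 2 * i) *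
          (1 + (-1:ℝ) ^ (2 * k + 1 - 2 * i)) * ∫ u in Ioi (0:ℝ), u ^ (2 * i) * ff u : ℝ)) : ℂ)
        + (((((2 * k + 1).choose (2 * i + 1) : ℝ) * b ^ (2 * k + 1 - (2 * i + 1)) *
          (1 + (-1:ℝ) ^ (2 * k + 1 - (2 * i + 1))) *
            ∫ u in Ioi (0:ℝ), u ^ (2 * i + 1) * ff u : ℝ)) : ℂ)
      = ((2 * k + 1).factorial : ℂ) *
          (riemannZeta (2 * ((i + 1 : ℕ):ℂ)) * ((2 : ℂ) ^ (2 * (i + 1) + 1) - 4) *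
            (b : ℂ) ^ (2 * k + 2 - 2 * (i + 1)) / ((2 * k + 2 - 2 * (i + 1)).factorial : ℂ)) := by
    intro i hi
    have hik : i ≤ k := by
      have := Finset.mem_range.mp hi; omega
    have hoddsub : Odd (2 * k + 1 - 2 * i) := ⟨k - i, by omega⟩
    have ht0 : (((2 * k + 1).choose (2 * i) : ℝ) * b ^ (2 * k + 1 - 2 * i) *
        (1 + (-1:ℝ) ^ (2 * k + 1 - 2 * i)) * ∫ u in Ioi (0:ℝ), u ^ (2 * i) * ff u) = 0 := by
      rw [hoddsub.neg_one_pow]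
      ring
    rw [ht0, Complex.ofReal_zero, zero_add]
    rw [show 2 * k + 1 - (2 * i + 1) = 2 * (k - i) by omega,
      Even.neg_one_pow (even_two_mul _),
      integral_pow_ff (2 * i + 1) (by omega),
      show 2 * i + 1 + 1 = 2 * (i + 1) by ring,
      show 2 * k + 2 - 2 * (i + 1) = 2 * (k - i) by omega]
    rw [show riemannZeta (2 * ((i + 1 : ℕ):ℂ)) * ((2 : ℂ) ^ (2 * (i + 1) + 1) - 4)
        = ((2 : ℂ) ^ (2 * (i + 1) + 1) - 4) * riemannZeta (2 * ((i + 1 : ℕ):ℂ)) from mul_comm _ _]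
    rw [← zeta_term (i + 1) (by omega)]
    push_cast
    rw [Nat.cast_choose ℂ (show 2 * i + 1 ≤ 2 * k + 1 by omega),
      show 2 * k + 1 - (2 * i + 1) = 2 * (k - i) by omega]
    have hf1 : (((2 * i + 1).factorial : ℂ)) ≠ 0 := Nat.cast_ne_zero.mpr (Nat.factorial_ne_zero _)
    have hf2 : (((2 * (k - i)).factorial : ℂ)) ≠ 0 := Nat.cast_ne_zero.mpr (Nat.factorial_ne_zero _)
    field_simp
    ring
  rw [Finset.sum_congr rfl hS, ← hZ0]
  ring

theorem stmt_4 (k : ℕ) (b : ℝ) :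
    ((∫ x in Ioi (0:ℝ), x ^ (2 * k + 1) * H x b : ℝ) : ℂ)
      = (Nat.factorial (2 * k + 1) : ℂ) *
        ∑ i ∈ Finset.range (k + 2),
          riemannZeta (2 * i) * ((2 : ℂ) ^ (2 * i + 1) - 4) *
            (b : ℂ) ^ (2 * k + 2 - 2 * i) / (Nat.factorial (2 * k + 2 - 2 * i) : ℂ) := by
  rcases le_total 0 b with hb | hb
  · exact stmt_main k hb
  · have hb' : 0 ≤ -b := by linarith
    have h := stmt_main k hb'
    have hH : ∀ x : ℝ, x ^ (2 * k + 1) * H x b = x ^ (2 * k + 1) * H x (-b) := by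
      intro x
      unfold H
      rw [show x + -b = x - b by ring, show x - -b = x + b by ring]
      ring
    have hint : (∫ x in Ioi (0:ℝ), x ^ (2 * k + 1) * H x b)
        = ∫ x in Ioi (0:ℝ), x ^ (2 * k + 1) * H x (-b) :=
      integral_congr_ae (Filter.EventuallyEq.of_eq (funext hH))
    rw [hint, h]
    congr 1
    apply Finset.sum_congr rfl
    intro i hi
    have hev : Even (2 * k + 2 - 2 * i) := ⟨k + 1 - i, by
      have := Finset.mem_range.mp hi; omega⟩
    rw [Complex.ofReal_neg, hev.neg_pow]
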